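/- Suppose for every k ∈ S (successful iterations) we have f(x_k) − f(x_{k+1}) ≥ c·Δ_k² for some c > 0 and Δ_k ≤ Δ_max, f is bounded below, x_{k+1} = x_k for k ∉ S, and for each k ∉ S, Δ_k ≤ γ·Δ_{i(k)} where i(k) ∈ S is the most recent successful iteration before k (or Δ_k ≤ Δ_0·γ if no such iteration exists), with γ ≥ 1 fixed. If S is infinite then Δ_k → 0 over all k. -/

import Mathlib

open Filter

/-- If successful iterations `k ∈ S` give `f(x_k) - f(x_{k+1}) ≥ c·Δ_k²`, `f` is
bounded below, `x_{k+1} = x_k` off `S`, and for `k ∉ S` the radius is controlled by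
the most recent successful iteration (`Δ_k ≤ γ·Δ_{i(k)}`, or `Δ_k ≤ Δ_0·γ` if none),
and `S` is infinite, then `Δ_k → 0`. -/
theorem stmt5 {n : ℕ} (f : EuclideanSpace ℝ (Fin n) → ℝ)
    (x : ℕ → EuclideanSpace ℝ (Fin n)) (Δ : ℕ → ℝ) (S : Set ℕ)
    (c γ Δmax : ℝ) (i : ℕ → ℕ)
    (hc : 0 < c) (hγ : 1 ≤ γ)
    (hΔpos : ∀ k, 0 < Δ k) (hΔmax : ∀ k, Δ k ≤ Δmax)
    (hbdd : ∃ B : ℝ, ∀ y, B ≤ f y)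
    (hmono : ∀ k, f (x (k + 1)) ≤ f (x k))
    (hdecS : ∀ k ∈ S, f (x k) - f (x (k + 1)) ≥ c * (Δ k) ^ 2)
    (hfix : ∀ k ∉ S, x (k + 1) = x k)
    (hpred : ∀ k ∉ S, (∃ j ∈ S, j < k) →
      i k ∈ S ∧ i k < k ∧ (∀ j ∈ S, j < k → j ≤ i k) ∧ Δ k ≤ γ * Δ (i k))
    (hnopred : ∀ k ∉ S, (¬ ∃ j ∈ S, j < k) → Δ k ≤ Δ 0 * γ)
    (hSinf : S.Infinite) :
    Tendsto Δ atTop (nhds 0) := by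
  obtain ⟨B, hB⟩ := hbdd
  have hγ0 : (0:ℝ) < γ := lt_of_lt_of_le one_pos hγ
  -- Key sum bound
  have hsum : ∀ F : Finset ℕ, ↑F ⊆ S → ∑ k ∈ F, c * (Δ k) ^ 2 ≤ f (x 0) - B := by
    intro F hF
    set N := F.sup id + 1 with hN
    have hFsub : F ⊆ Finset.range N := by
      intro k hk
      exact Finset.mem_range.mpr (Nat.lt_succ_of_le (Finset.le_sup (f := id) hk))
    calc ∑ k ∈ F, c * (Δ k) ^ 2
        ≤ ∑ k ∈ F, (f (x k) - f (x (k+1))) := by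
          apply Finset.sum_le_sum
          intro k hk
          exact hdecS k (hF hk)
      _ ≤ ∑ k ∈ Finset.range N, (f (x k) - f (x (k+1))) := by
          apply Finset.sum_le_sum_of_subset_of_nonneg hFsub
          intro k _ _
          linarith [hmono k]
      _ = f (x 0) - f (x N) := Finset.sum_range_sub' (fun k => f (x k)) N
      _ ≤ f (x 0) - B := by linarith [hB (x N)]
  -- For each ε>0, {k ∈ S | ε ≤ γ * Δ k} is finite
  have hfin : ∀ ε : ℝ, 0 < ε → {k | k ∈ S ∧ ε ≤ γ * Δ k}.Finite := by
    intro ε hε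
    by_contra hinf
    have hinf : {k | k ∈ S ∧ ε ≤ γ * Δ k}.Infinite := hinf
    have hq : 0 < c * (ε / γ) ^ 2 := by positivity
    obtain ⟨m, hm⟩ := exists_nat_gt ((f (x 0) - B) / (c * (ε / γ) ^ 2))
    obtain ⟨F, hFsub, hFcard⟩ := hinf.exists_subset_card_eq m
    have h1 : (m : ℝ) * (c * (ε / γ) ^ 2) ≤ ∑ k ∈ F, c * (Δ k) ^ 2 := by
      have := Finset.card_nsmul_le_sum F (fun k => c * (Δ k) ^ 2) (c * (ε / γ) ^ 2)
        (fun k hk => by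
          have h := (hFsub hk).2
          have hΔk : ε / γ ≤ Δ k := (div_le_iff₀' hγ0).mpr h
          have : (ε / γ) ^ 2 ≤ (Δ k) ^ 2 := by
            apply pow_le_pow_left₀ (by positivity) hΔk
          nlinarith)
      rwa [hFcard, nsmul_eq_mul] at this
    have h2 : ∑ k ∈ F, c * (Δ k) ^ 2 ≤ f (x 0) - B :=
      hsum F (fun k hk => (hFsub hk).1)
    have h3 : (f (x 0) - B) / (c * (ε / γ) ^ 2) * (c * (ε / γ) ^ 2) < m * (c * (ε / γ) ^ 2) :=
      mul_lt_mul_of_pos_right hm hq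
    rw [div_mul_cancel₀ _ (ne_of_gt hq)] at h3
    linarith
  -- conclude
  rw [Metric.tendsto_atTop]
  intro ε hε
  have hT := hfin ε hε
  set b := hT.toFinset.sup id with hb
  obtain ⟨N, hNS, hNb⟩ := hSinf.exists_gt b
  refine ⟨N + 1, fun k hk => ?_⟩
  have hnotT : ∀ j, j ∈ S → b < j → γ * Δ j < ε := by
    intro j hjS hbj
    by_contra h
    push_neg at h
    have hmem : j ∈ hT.toFinset := hT.mem_toFinset.mpr ⟨hjS, h⟩
    have := Finset.le_sup (f := id) hmem
    simp only [id] at this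
    omega
  have hkey : Δ k < ε := by
    by_cases hkS : k ∈ S
    · have h := hnotT k hkS (by omega)
      nlinarith [hΔpos k]
    · have hex : ∃ j ∈ S, j < k := ⟨N, hNS, by omega⟩
      obtain ⟨hiS, hik, hmax, hle⟩ := hpred k hkS hex
      have hNi : N ≤ i k := hmax N hNS (by omega)
      have h := hnotT (i k) hiS (by omega)
      linarith
  have : dist (Δ k) 0 = Δ k := by
    rw [Real.dist_eq, sub_zero, abs_of_pos (hΔpos k)]
  rw [this]
  exact hkey
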